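/- Let H be a complex Hilbert space, A a bounded normal operator on H, and G a countable set of vectors in H such that the family (A^n g), indexed by (g,n) ∈ G × ℕ, is a frame for H. Then ‖A‖ ≤ 1 and ‖A f‖ < ‖f‖ for every nonzero f ∈ H. -/

import Mathlib

open ContinuousLinearMap
open scoped InnerProductSpace ENNReal

lemma aux_norm_sq_of_normal {R : Type*} [NormedRing R] [StarRing R] [CStarRing R]
    (B : R) (hB : Commute (star B) B) : ‖B ^ 2‖ = ‖B‖ ^ 2 := by
  have hsa : IsSelfAdjoint (star B * B) := IsSelfAdjoint.star_mul_self B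
  have key : ‖B ^ 2‖ ^ 2 = (‖B‖ ^ 2) ^ 2 := by
    calc ‖B ^ 2‖ ^ 2 = ‖star (B ^ 2) * B ^ 2‖ := by
          rw [CStarRing.norm_star_mul_self, sq]
      _ = ‖(star B * B) * (star B * B)‖ := by rw [star_pow, ← hB.mul_pow, sq]
      _ = ‖star (star B * B) * (star B * B)‖ := by nth_rw 1 [← hsa.star_eq]
      _ = ‖star B * B‖ ^ 2 := by rw [CStarRing.norm_star_mul_self, sq]
      _ = (‖B‖ ^ 2) ^ 2 := by rw [CStarRing.norm_star_mul_self]; ring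
  have h1 := Real.sqrt_sq (norm_nonneg (B ^ 2))
  have h2 := Real.sqrt_sq (pow_nonneg (norm_nonneg B) 2)
  rw [← h1, ← h2, key]

lemma aux_norm_two_pow {R : Type*} [NormedRing R] [StarRing R] [CStarRing R]
    (B : R) (hB : Commute (star B) B) (k : ℕ) : ‖B ^ 2 ^ k‖ = ‖B‖ ^ 2 ^ k := by
  induction k with
  | zero => simp
  | succ k ih =>
    have hcomm : Commute (star (B ^ 2 ^ k)) (B ^ 2 ^ k) := by
      rw [star_pow]; exact hB.pow_pow _ _
    rw [pow_succ, pow_mul, aux_norm_sq_of_normal _ hcomm, ih, ← pow_mul, ← pow_succ]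

set_option maxHeartbeats 1000000 in
/-- If `A` is a bounded normal operator on a complex Hilbert space `H` and `G` is a countable
set of vectors such that `{A^n g : g ∈ G, n ∈ ℕ}` is a frame for `H`, then `‖A‖ ≤ 1` and
`‖A f‖ < ‖f‖` for every nonzero `f`. -/
theorem stmt_6 {H : Type*} [NormedAddCommGroup H] [InnerProductSpace ℂ H] [CompleteSpace H]
    (A : H →L[ℂ] H) (hA : adjoint A ∘L A = A ∘L adjoint A)
    (G : Set H) (hG : G.Countable)
    (hframe : ∃ α β : ℝ, 0 < α ∧ α ≤ β ∧ ∀ f : H,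
      ENNReal.ofReal (α * ‖f‖ ^ 2) ≤
        (∑' p : ↥G × ℕ, (‖⟪f, (A ^ p.2) (p.1 : H)⟫_ℂ‖₊ : ℝ≥0∞) ^ 2) ∧
      (∑' p : ↥G × ℕ, (‖⟪f, (A ^ p.2) (p.1 : H)⟫_ℂ‖₊ : ℝ≥0∞) ^ 2) ≤
        ENNReal.ofReal (β * ‖f‖ ^ 2)) :
    ‖A‖ ≤ 1 ∧ ∀ f : H, f ≠ 0 → ‖A f‖ < ‖f‖ := by
  obtain ⟨α, β, hα, hαβ, hfr⟩ := hframe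
  have hβ : (0:ℝ) < β := lt_of_lt_of_le hα hαβ
  set a : H → ↥G × ℕ → ℝ≥0∞ :=
    fun f p => (‖⟪f, (A ^ p.2) (p.1 : H)⟫_ℂ‖₊ : ℝ≥0∞) ^ 2 with ha
  -- A is star-normal
  have hstar : Commute (star A) A := by
    rw [ContinuousLinearMap.star_eq_adjoint]
    exact hA
  -- (adjoint A)^m = adjoint (A^m)
  have hpow : ∀ m : ℕ, (adjoint A) ^ m = adjoint (A ^ m) := by
    intro m
    rw [← ContinuousLinearMap.star_eq_adjoint, ← ContinuousLinearMap.star_eq_adjoint, star_pow]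
  -- shift identity
  have shift : ∀ (m : ℕ) (f : H) (p : ↥G × ℕ),
      a (((adjoint A) ^ m) f) p = a f (p.1, p.2 + m) := by
    intro m f p
    have h1 : ⟪((adjoint A) ^ m) f, (A ^ p.2) (p.1 : H)⟫_ℂ
        = ⟪f, (A ^ (p.2 + m)) (p.1 : H)⟫_ℂ := by
      rw [hpow, adjoint_inner_left, ← ContinuousLinearMap.mul_apply, ← pow_add, add_comm m p.2]
    simp only [ha, h1]
  have shift_sum : ∀ (m : ℕ) (f : H),
      (∑' p : ↥G × ℕ, a (((adjoint A) ^ m) f) p) = ∑' p : ↥G × ℕ, a f (p.1, p.2 + m) :=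
    fun m f => tsum_congr (shift m f)
  have σinj : ∀ m : ℕ, Function.Injective (fun p : ↥G × ℕ => (p.1, p.2 + m)) := by
    intro m p q h
    simp only [Prod.ext_iff] at h ⊢
    exact ⟨h.1, by omega⟩
  have hle : ∀ (m : ℕ) (f : H),
      (∑' p : ↥G × ℕ, a f (p.1, p.2 + m)) ≤ ∑' p : ↥G × ℕ, a f p := fun m f =>
    ENNReal.tsum_comp_le_tsum_of_injective (σinj m) (a f)
  -- quantitative bound
  have bound : ∀ (m : ℕ) (f : H), α * ‖((adjoint A) ^ m) f‖ ^ 2 ≤ β * ‖f‖ ^ 2 := by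
    intro m f
    have l := (hfr (((adjoint A) ^ m) f)).1
    have u := (hfr f).2
    have chain : ENNReal.ofReal (α * ‖((adjoint A) ^ m) f‖ ^ 2)
        ≤ ENNReal.ofReal (β * ‖f‖ ^ 2) := by
      refine le_trans l (le_trans ?_ u)
      calc (∑' p : ↥G × ℕ, a (((adjoint A) ^ m) f) p)
          = ∑' p : ↥G × ℕ, a f (p.1, p.2 + m) := shift_sum m f
        _ ≤ ∑' p : ↥G × ℕ, a f p := hle m f
    exact (ENNReal.ofReal_le_ofReal_iff (by positivity)).mp chain
  -- operator norm bound for powers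
  have opnorm : ∀ m : ℕ, ‖A ^ m‖ ≤ Real.sqrt (β / α) := by
    intro m
    have hnorm : ‖A ^ m‖ = ‖(adjoint A) ^ m‖ := by
      rw [← ContinuousLinearMap.star_eq_adjoint, ← star_pow, norm_star]
    rw [hnorm]
    refine opNorm_le_bound _ (Real.sqrt_nonneg _) fun f => ?_
    have h2 : ‖((adjoint A) ^ m) f‖ ^ 2 ≤ (β / α) * ‖f‖ ^ 2 := by
      rw [div_mul_eq_mul_div, le_div_iff₀ hα, mul_comm]
      exact bound m f
    calc ‖((adjoint A) ^ m) f‖ = Real.sqrt (‖((adjoint A) ^ m) f‖ ^ 2) :=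
          (Real.sqrt_sq (norm_nonneg _)).symm
      _ ≤ Real.sqrt ((β / α) * ‖f‖ ^ 2) := Real.sqrt_le_sqrt h2
      _ = Real.sqrt (β / α) * ‖f‖ := by
          rw [Real.sqrt_mul (by positivity), Real.sqrt_sq (norm_nonneg _)]
  -- norm at most one
  have hA1 : ‖A‖ ≤ 1 := by
    by_contra hlt
    push_neg at hlt
    obtain ⟨n, hn⟩ := pow_unbounded_of_one_lt (Real.sqrt (β / α)) hlt
    have h1 : ‖A‖ ^ n ≤ ‖A‖ ^ (2 ^ n) :=
      pow_le_pow_right₀ hlt.le (Nat.le_of_lt (Nat.lt_two_pow_self (n := n)))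
    have h2 : ‖A‖ ^ (2 ^ n) = ‖A ^ (2 ^ n)‖ := (aux_norm_two_pow A hstar n).symm
    have := opnorm (2 ^ n)
    linarith
  refine ⟨hA1, fun f hf => ?_⟩
  -- easy inequality
  have hfle : ‖A f‖ ≤ ‖f‖ := by
    calc ‖A f‖ ≤ ‖A‖ * ‖f‖ := A.le_opNorm f
      _ ≤ 1 * ‖f‖ := mul_le_mul_of_nonneg_right hA1 (norm_nonneg f)
      _ = ‖f‖ := one_mul _
  rcases lt_or_eq_of_le hfle with h | heq
  · exact h
  exfalso
  -- T f = f where T = adjoint A * A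
  have hTnorm : ‖(adjoint A * A) f‖ ≤ ‖f‖ := by
    calc ‖(adjoint A * A) f‖ ≤ ‖adjoint A * A‖ * ‖f‖ := le_opNorm _ f
      _ ≤ (‖adjoint A‖ * ‖A‖) * ‖f‖ :=
          mul_le_mul_of_nonneg_right (norm_mul_le _ _) (norm_nonneg f)
      _ = (‖A‖ * ‖A‖) * ‖f‖ := by
          rw [← ContinuousLinearMap.star_eq_adjoint, norm_star]
      _ ≤ 1 * ‖f‖ :=
          mul_le_mul_of_nonneg_right (mul_le_one₀ hA1 (norm_nonneg A) hA1) (norm_nonneg f)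
      _ = ‖f‖ := one_mul _
  have hre : RCLike.re ⟪(adjoint A * A) f, f⟫_ℂ = ‖f‖ ^ 2 := by
    rw [ContinuousLinearMap.mul_apply, adjoint_inner_left, inner_self_eq_norm_sq, ← heq]
  have hsub : ‖(adjoint A * A) f - f‖ ^ 2 ≤ 0 := by
    rw [@norm_sub_sq ℂ, hre]
    nlinarith [norm_nonneg ((adjoint A * A) f), norm_nonneg f]
  have hTf : (adjoint A * A) f = f := by
    have h0 : ‖(adjoint A * A) f - f‖ = 0 := by
      nlinarith [norm_nonneg ((adjoint A * A) f - f)]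
    rw [norm_eq_zero, sub_eq_zero] at h0
    exact h0
  -- (T^m) f = f
  have hTm : ∀ m : ℕ, ((adjoint A * A) ^ m) f = f := by
    intro m
    induction m with
    | zero => simp
    | succ m ih => rw [pow_succ, ContinuousLinearMap.mul_apply, hTf, ih]
  -- ‖(adjoint A)^m f‖ = ‖f‖
  have hAm : ∀ m : ℕ, ‖((adjoint A) ^ m) f‖ = ‖f‖ := by
    intro m
    have hcomm : A ^ m * (adjoint A) ^ m = (adjoint A * A) ^ m := by
      have h1 : (A * adjoint A) ^ m = A ^ m * (adjoint A) ^ m := by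
        rw [← ContinuousLinearMap.star_eq_adjoint]
        exact hstar.symm.mul_pow m
      rw [← h1, ← ContinuousLinearMap.star_eq_adjoint, ← hstar.eq,
        ContinuousLinearMap.star_eq_adjoint]
    have h1 : ⟪((adjoint A) ^ m) f, ((adjoint A) ^ m) f⟫_ℂ = ⟪f, f⟫_ℂ := by
      nth_rw 1 [hpow]
      rw [adjoint_inner_left, ← ContinuousLinearMap.mul_apply, hcomm, hTm]
    have h2 : ‖((adjoint A) ^ m) f‖ ^ 2 = ‖f‖ ^ 2 := by
      rw [← inner_self_eq_norm_sq (𝕜 := ℂ), ← inner_self_eq_norm_sq (𝕜 := ℂ), h1]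
    rw [← Real.sqrt_sq (norm_nonneg (((adjoint A) ^ m) f)),
      ← Real.sqrt_sq (norm_nonneg f), h2]
  -- contradiction via the series
  set c : ℝ≥0∞ := ENNReal.ofReal (α * ‖f‖ ^ 2) with hc
  have hfpos : (0:ℝ) < ‖f‖ := norm_pos_iff.mpr hf
  have hc0 : c ≠ 0 := by
    simp only [hc, ne_eq, ENNReal.ofReal_eq_zero, not_le]
    positivity
  set S : ℝ≥0∞ := ∑' p : ↥G × ℕ, a f p with hSdef
  have hStop : S ≠ ⊤ :=
    ne_top_of_le_ne_top ENNReal.ofReal_ne_top (hfr f).2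
  have hc_le : ∀ m : ℕ, c ≤ ∑' p : ↥G × ℕ, a f (p.1, p.2 + m) := by
    intro m
    have l := (hfr (((adjoint A) ^ m) f)).1
    rw [hAm m] at l
    exact le_trans l (le_of_eq (shift_sum m f))
  have key : ∀ F : Finset (↥G × ℕ), (∑ p ∈ F, a f p) + c ≤ S := by
    intro F
    set m : ℕ := (F.sup fun p => p.2) + 1 with hm
    set σ : ↥G × ℕ → ↥G × ℕ := fun p => (p.1, p.2 + m) with hσdef
    have hσ : Function.Injective σ := σinj m
    have hdisj : Disjoint (↑F : Set (↥G × ℕ)) (Set.range σ) := by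
      rw [Set.disjoint_left]
      rintro p hpF ⟨q, rfl⟩
      have h1 : (σ q).2 ≤ F.sup fun p => p.2 := Finset.le_sup hpF
      simp only [hσdef] at h1
      omega
    have hrange : c ≤ ∑' p : Set.range σ, a f p := by
      rw [tsum_range (a f) hσ]
      exact hc_le m
    calc (∑ p ∈ F, a f p) + c
        ≤ (∑' p : (↑F : Set (↥G × ℕ)), a f p) + ∑' p : Set.range σ, a f p := by
          rw [← Finset.tsum_subtype' F (a f)]
          exact add_le_add le_rfl hrange
      _ = ∑' p : ↑((↑F : Set (↥G × ℕ)) ∪ Set.range σ), a f p :=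
          (ENNReal.summable.tsum_union_disjoint hdisj ENNReal.summable).symm
      _ ≤ S := ENNReal.tsum_comp_le_tsum_of_injective Subtype.val_injective (a f)
  have hS_iSup : S = ⨆ s : Finset (↥G × ℕ), ∑ p ∈ s, a f p := ENNReal.tsum_eq_iSup_sum
  have hsup : S + c ≤ S := by
    conv_lhs => rw [hS_iSup]
    rw [ENNReal.iSup_add]
    exact iSup_le fun F => key F
  exact absurd hsup (not_le.mpr (ENNReal.lt_add_right hStop hc0))
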